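/- Let n > 1, let U ⊂ ℝⁿ be a nonempty open O(n)-invariant set, I = {|x|² : x ∈ U}, and let θ : I → (0,∞) be of class C² satisfying 2 s θ(s) θ''(s) = (1 − θ'(s)) (s θ'(s)² + θ(s)) for all s ∈ I, together with θ'(s) > 1 for all s ∈ I. Set ρ(x+iy) = |y|² − θ(|x|²) and Σ = {x+iy : x ∈ U, |y|² = θ(|x|²)}. Then L_ρ(p;v) ≤ 0 for every p ∈ Σ and every v ∈ T_p^ℂΣ; moreover, L_ρ(p;v) < 0 for every nonzero v ∈ T_p^ℂΣ at every point p = x+iy ∈ Σ with ⟨x,y⟩ ≠ 0, while at every point p = x+iy ∈ Σ with ⟨x,y⟩ = 0 there exists a nonzero v ∈ T_p^ℂΣ with L_ρ(p;v) = 0. -/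

import Mathlib

open Complex Set

/-- The Levi form of a `C²` function `ρ` at `p` in direction `v`:
`4 L_ρ(p;v) = H_p(v,v) + H_p(iv,iv)` where `H_p` is the second real Fréchet derivative. -/
noncomputable def leviForm {E : Type*} [NormedAddCommGroup E] [NormedSpace ℂ E]
    (ρ : E → ℝ) (p v : E) : ℝ :=
  (iteratedFDeriv ℝ 2 ρ p ![v, v]
    + iteratedFDeriv ℝ 2 ρ p ![Complex.I • v, Complex.I • v]) / 4

/-- The complex tangent space `T_p^ℂΣ = {v : dρ_p(v) = 0 and dρ_p(iv) = 0}`. -/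
def complexTangent {E : Type*} [NormedAddCommGroup E] [NormedSpace ℂ E]
    (ρ : E → ℝ) (p : E) : Set E :=
  {v | fderiv ℝ ρ p v = 0 ∧ fderiv ℝ ρ p (Complex.I • v) = 0}

/-- `ρ(x+iy) = |y|² - θ(|x|²)`. -/
noncomputable def rho (n : ℕ) (θ : ℝ → ℝ) : (Fin n → ℂ) → ℝ :=
  fun z => (∑ j, (z j).im ^ 2) - θ (∑ j, (z j).re ^ 2)

/-- The hypersurface `Σ = {x+iy : x ∈ U, |y|² = θ(|x|²)}`. -/
def SigmaSet (n : ℕ) (U : Set (Fin n → ℝ)) (θ : ℝ → ℝ) : Set (Fin n → ℂ) :=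
  {z | (fun j => (z j).re) ∈ U ∧ (∑ j, (z j).im ^ 2) = θ (∑ j, (z j).re ^ 2)}

/-! ### Auxiliary coordinate functionals -/

noncomputable def px {n : ℕ} (j : Fin n) : (Fin n → ℂ) →L[ℝ] ℝ :=
  Complex.reCLM.comp (ContinuousLinearMap.proj j)

noncomputable def py {n : ℕ} (j : Fin n) : (Fin n → ℂ) →L[ℝ] ℝ :=
  Complex.imCLM.comp (ContinuousLinearMap.proj j)

@[simp] lemma px_apply {n : ℕ} (j : Fin n) (z : Fin n → ℂ) : px j z = (z j).re := rfl
@[simp] lemma py_apply {n : ℕ} (j : Fin n) (z : Fin n → ℂ) : py j z = (z j).im := rfl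

lemma hasFDerivAt_qre {n : ℕ} (z : Fin n → ℂ) :
    HasFDerivAt (fun z : Fin n → ℂ => ∑ j, (z j).re ^ 2) (∑ j, (2 * (z j).re) • px j) z := by
  have h : HasFDerivAt (fun z : Fin n → ℂ => ∑ j, px j z * px j z)
      (∑ j, ((px j) z • (px j : (Fin n → ℂ) →L[ℝ] ℝ) + (px j) z • (px j : (Fin n → ℂ) →L[ℝ] ℝ))) z :=
    HasFDerivAt.fun_sum fun j _ => ((px j).hasFDerivAt).mul ((px j).hasFDerivAt)
  have e1 : (fun z : Fin n → ℂ => ∑ j, (z j).re ^ 2) = fun z : Fin n → ℂ => ∑ j, px j z * px j z := by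
    funext w; exact Finset.sum_congr rfl fun j _ => by simp [pow_two]
  have e2 : (∑ j, (2 * (z j).re) • px j : (Fin n → ℂ) →L[ℝ] ℝ)
      = ∑ j, ((px j) z • (px j : (Fin n → ℂ) →L[ℝ] ℝ) + (px j) z • px j) :=
    Finset.sum_congr rfl fun j _ => by rw [px_apply, two_mul, add_smul]
  rw [e1, e2]; exact h

lemma hasFDerivAt_qim {n : ℕ} (z : Fin n → ℂ) :
    HasFDerivAt (fun z : Fin n → ℂ => ∑ j, (z j).im ^ 2) (∑ j, (2 * (z j).im) • py j) z := by
  have h : HasFDerivAt (fun z : Fin n → ℂ => ∑ j, py j z * py j z)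
      (∑ j, ((py j) z • (py j : (Fin n → ℂ) →L[ℝ] ℝ) + (py j) z • (py j : (Fin n → ℂ) →L[ℝ] ℝ))) z :=
    HasFDerivAt.fun_sum fun j _ => ((py j).hasFDerivAt).mul ((py j).hasFDerivAt)
  have e1 : (fun z : Fin n → ℂ => ∑ j, (z j).im ^ 2) = fun z : Fin n → ℂ => ∑ j, py j z * py j z := by
    funext w; exact Finset.sum_congr rfl fun j _ => by simp [pow_two]
  have e2 : (∑ j, (2 * (z j).im) • py j : (Fin n → ℂ) →L[ℝ] ℝ)
      = ∑ j, ((py j) z • (py j : (Fin n → ℂ) →L[ℝ] ℝ) + (py j) z • py j) :=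
    Finset.sum_congr rfl fun j _ => by rw [py_apply, two_mul, add_smul]
  rw [e1, e2]; exact h

/-- Candidate first derivative of `rho`. -/
noncomputable def Gmap (n : ℕ) (θ : ℝ → ℝ) (z : Fin n → ℂ) : (Fin n → ℂ) →L[ℝ] ℝ :=
  (∑ j, (2 * (z j).im) • py j) - deriv θ (∑ j, (z j).re ^ 2) • (∑ j, (2 * (z j).re) • px j)

lemma hasFDerivAt_rho {n : ℕ} {θ : ℝ → ℝ} {z : Fin n → ℂ}
    (hd : HasDerivAt θ (deriv θ (∑ j, (z j).re ^ 2)) (∑ j, (z j).re ^ 2)) :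
    HasFDerivAt (rho n θ) (Gmap n θ z) z := by
  have h2 : HasFDerivAt (θ ∘ fun z : Fin n → ℂ => ∑ j, (z j).re ^ 2)
      (deriv θ (∑ j, (z j).re ^ 2) • (∑ j, (2 * (z j).re) • px j)) z :=
    hd.comp_hasFDerivAt z (hasFDerivAt_qre z)
  exact (hasFDerivAt_qim z).sub h2

/-- Candidate second derivative of `rho`. -/
noncomputable def Hmap (n : ℕ) (θ : ℝ → ℝ) (p : Fin n → ℂ) :
    (Fin n → ℂ) →L[ℝ] ((Fin n → ℂ) →L[ℝ] ℝ) :=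
  (∑ j, ((2:ℝ) • (py j : (Fin n → ℂ) →L[ℝ] ℝ)).smulRight (py j))
    - (deriv θ (∑ j, (p j).re ^ 2) • (∑ j, ((2:ℝ) • (px j : (Fin n → ℂ) →L[ℝ] ℝ)).smulRight (px j))
       + ((deriv (deriv θ) (∑ j, (p j).re ^ 2)) • (∑ j, (2 * (p j).re) • px j)).smulRight
           (∑ j, (2 * (p j).re) • px j))

lemma hasFDerivAt_Gmap {n : ℕ} {θ : ℝ → ℝ} {p : Fin n → ℂ}
    (hd2 : HasDerivAt (deriv θ) (deriv (deriv θ) (∑ j, (p j).re ^ 2)) (∑ j, (p j).re ^ 2)) :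
    HasFDerivAt (Gmap n θ) (Hmap n θ p) p := by
  have hG1 : HasFDerivAt (fun z : Fin n → ℂ => ∑ j, (2 * (z j).im) • (py j : (Fin n → ℂ) →L[ℝ] ℝ))
      (∑ j, ((2:ℝ) • (py j : (Fin n → ℂ) →L[ℝ] ℝ)).smulRight (py j)) p := by
    refine HasFDerivAt.fun_sum fun j _ => ?_
    exact ((py j).hasFDerivAt.const_mul (2:ℝ)).smul_const (py j)
  have hS : HasFDerivAt (fun z : Fin n → ℂ => ∑ j, (2 * (z j).re) • (px j : (Fin n → ℂ) →L[ℝ] ℝ))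
      (∑ j, ((2:ℝ) • (px j : (Fin n → ℂ) →L[ℝ] ℝ)).smulRight (px j)) p := by
    refine HasFDerivAt.fun_sum fun j _ => ?_
    exact ((px j).hasFDerivAt.const_mul (2:ℝ)).smul_const (px j)
  have hc : HasFDerivAt (fun z : Fin n → ℂ => deriv θ (∑ j, (z j).re ^ 2))
      ((deriv (deriv θ) (∑ j, (p j).re ^ 2)) • (∑ j, (2 * (p j).re) • px j)) p :=
    by have := hd2.comp_hasFDerivAt p (hasFDerivAt_qre p); exact this
  have hG2 := hc.smul hS
  exact hG1.sub hG2

lemma Hmap_apply {n : ℕ} (θ : ℝ → ℝ) (p v w : Fin n → ℂ) :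
    Hmap n θ p v w =
      2 * (∑ j, (v j).im * (w j).im)
      - deriv θ (∑ j, (p j).re ^ 2) * (2 * ∑ j, (v j).re * (w j).re)
      - deriv (deriv θ) (∑ j, (p j).re ^ 2)
         * (2 * ∑ j, (p j).re * (v j).re) * (2 * ∑ j, (p j).re * (w j).re) := by
  simp [Hmap, ContinuousLinearMap.sum_apply, Finset.mul_sum, mul_comm, mul_left_comm, mul_assoc]
  ring_nf
  congr 1
  · congr 1
    exact Finset.sum_congr rfl fun _ _ => by ring
  · exact Finset.sum_congr rfl fun _ _ => Finset.sum_congr rfl fun _ _ => by ring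

lemma Gmap_apply {n : ℕ} (θ : ℝ → ℝ) (z v : Fin n → ℂ) :
    Gmap n θ z v = 2 * (∑ j, (z j).im * (v j).im)
      - deriv θ (∑ j, (z j).re ^ 2) * (2 * ∑ j, (z j).re * (v j).re) := by
  simp [Gmap, ContinuousLinearMap.sum_apply, Finset.mul_sum, mul_comm, mul_left_comm, mul_assoc]

variable {n : ℕ} {θ : ℝ → ℝ} {V : Set ℝ}

lemma hasDeriv_theta (hV : IsOpen V) (hθ : ContDiffOn ℝ 2 θ V) {s : ℝ} (hs : s ∈ V) :
    HasDerivAt θ (deriv θ s) s :=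
  ((hθ.differentiableOn (by norm_num)).differentiableAt (hV.mem_nhds hs)).hasDerivAt

lemma hasDeriv_theta' (hV : IsOpen V) (hθ : ContDiffOn ℝ 2 θ V) {s : ℝ} (hs : s ∈ V) :
    HasDerivAt (deriv θ) (deriv (deriv θ) s) s :=
  (((hθ.deriv_of_isOpen (m := 1) hV (by norm_num)).differentiableOn (by norm_num)).differentiableAt
    (hV.mem_nhds hs)).hasDerivAt

lemma fderiv_rho_eq (hV : IsOpen V) (hθ : ContDiffOn ℝ 2 θ V) {p : Fin n → ℂ}
    (hp : (∑ j, (p j).re ^ 2) ∈ V) :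
    fderiv ℝ (rho n θ) p = Gmap n θ p :=
  (hasFDerivAt_rho (hasDeriv_theta hV hθ hp)).fderiv

lemma fderiv_fderiv_rho (hV : IsOpen V) (hθ : ContDiffOn ℝ 2 θ V) {p : Fin n → ℂ}
    (hp : (∑ j, (p j).re ^ 2) ∈ V) :
    fderiv ℝ (fderiv ℝ (rho n θ)) p = Hmap n θ p := by
  have hq : Continuous (fun z : Fin n → ℂ => ∑ j, (z j).re ^ 2) := by
    exact continuous_finset_sum _ fun j _ =>
      (Complex.continuous_re.comp (continuous_apply j)).pow 2
  have hmem : {z : Fin n → ℂ | (∑ j, (z j).re ^ 2) ∈ V} ∈ nhds p :=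
    (hV.preimage hq).mem_nhds hp
  have hev : fderiv ℝ (rho n θ) =ᶠ[nhds p] Gmap n θ :=
    Filter.eventually_of_mem hmem fun z hz => fderiv_rho_eq hV hθ hz
  rw [hev.fderiv_eq]
  exact (hasFDerivAt_Gmap (hasDeriv_theta' hV hθ hp)).fderiv

lemma levi_eval (hV : IsOpen V) (hθ : ContDiffOn ℝ 2 θ V) {p : Fin n → ℂ}
    (hp : (∑ j, (p j).re ^ 2) ∈ V) (v : Fin n → ℂ) :
    leviForm (rho n θ) p v =
      (2 * (1 - deriv θ (∑ j, (p j).re ^ 2)) * ((∑ j, (v j).re ^ 2) + ∑ j, (v j).im ^ 2)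
        - 4 * deriv (deriv θ) (∑ j, (p j).re ^ 2)
            * ((∑ j, (p j).re * (v j).re) ^ 2 + (∑ j, (p j).re * (v j).im) ^ 2)) / 4 := by
  have h2 : ∀ w : Fin n → ℂ, iteratedFDeriv ℝ 2 (rho n θ) p ![w, w]
      = Hmap n θ p w w := by
    intro w
    rw [iteratedFDeriv_two_apply, fderiv_fderiv_rho hV hθ hp]
    simp [Matrix.cons_val_zero, Matrix.cons_val_one]
  rw [leviForm, h2, h2, Hmap_apply, Hmap_apply]
  have hre : ∀ j, ((Complex.I • v) j).re = -(v j).im := by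
    intro j; simp [Pi.smul_apply, Complex.mul_re]
  have him : ∀ j, ((Complex.I • v) j).im = (v j).re := by
    intro j; simp [Pi.smul_apply, Complex.mul_im]
  simp only [hre, him]
  have e1 : ∑ j, (p j).re * -(v j).im = -∑ j, (p j).re * (v j).im := by
    rw [← Finset.sum_neg_distrib]; exact Finset.sum_congr rfl fun j _ => by ring
  have e2 : ∑ j, -(v j).im * -(v j).im = ∑ j, (v j).im * (v j).im := by
    exact Finset.sum_congr rfl fun j _ => by ring
  have e3 : ∀ (f : Fin n → ℝ), ∑ j, f j * f j = ∑ j, f j ^ 2 := by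
    intro f; exact Finset.sum_congr rfl fun j _ => (pow_two _).symm
  rw [e1, e2, e3 (fun j => (v j).re), e3 (fun j => (v j).im)]
  ring

/-! ### The algebraic heart -/

/-- Gram determinant inequality. -/
lemma gram_ineq {m : ℕ} (x y u : Fin m → ℝ)
    (hD : 0 < (∑ j, x j ^ 2) * (∑ j, y j ^ 2) - (∑ j, x j * y j) ^ 2) :
    (∑ j, y j ^ 2) * (∑ j, x j * u j) ^ 2
      - 2 * (∑ j, x j * y j) * (∑ j, x j * u j) * (∑ j, y j * u j)
      + (∑ j, x j ^ 2) * (∑ j, y j * u j) ^ 2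
    ≤ ((∑ j, x j ^ 2) * (∑ j, y j ^ 2) - (∑ j, x j * y j) ^ 2) * (∑ j, u j ^ 2) := by
  set r := ∑ j, x j ^ 2
  set t := ∑ j, y j ^ 2
  set c := ∑ j, x j * y j
  set α := ∑ j, x j * u j
  set γ := ∑ j, y j * u j
  set D := r * t - c ^ 2 with hDdef
  set P := t * α - c * γ with hP
  set Q := r * γ - c * α with hQ
  have expand : ∑ j, (D * u j - P * x j - Q * y j) ^ 2
      = D ^ 2 * (∑ j, u j ^ 2) + P ^ 2 * r + Q ^ 2 * t
        - 2 * (D * P) * α - 2 * (D * Q) * γ + 2 * (P * Q) * c := by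
    have h : ∀ j : Fin m, (D * u j - P * x j - Q * y j) ^ 2
        = D ^ 2 * u j ^ 2 + P ^ 2 * x j ^ 2 + Q ^ 2 * y j ^ 2
          - 2 * (D * P) * (x j * u j) - 2 * (D * Q) * (y j * u j)
          + 2 * (P * Q) * (x j * y j) := fun j => by ring
    rw [Finset.sum_congr rfl fun j _ => h j]
    simp only [Finset.sum_add_distrib, Finset.sum_sub_distrib, ← Finset.mul_sum]
    rfl
  have key : ∑ j, (D * u j - P * x j - Q * y j) ^ 2
      = D * (D * (∑ j, u j ^ 2) - (t * α ^ 2 - 2 * c * α * γ + r * γ ^ 2)) := by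
    rw [expand, hP, hQ, hDdef]; ring
  have h0 : 0 ≤ ∑ j, (D * u j - P * x j - Q * y j) ^ 2 :=
    Finset.sum_nonneg fun j _ => sq_nonneg _
  rw [key] at h0
  nlinarith [h0, hD]

lemma scalar1 (r c θv t1 t2 α β A B : ℝ)
    (hr : 0 < r) (hθv : 0 < θv) (ht1 : 1 < t1)
    (hode : 2 * r * θv * t2 = (1 - t1) * (r * t1 ^ 2 + θv))
    (hMa : θv * α ^ 2 - 2 * c * α * (-(t1 * β)) + r * (-(t1 * β)) ^ 2 ≤ (r * θv - c ^ 2) * A)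
    (hMb : θv * β ^ 2 - 2 * c * β * (t1 * α) + r * (t1 * α) ^ 2 ≤ (r * θv - c ^ 2) * B) :
    r * θv * (2 * (1 - t1) * (A + B) - 4 * t2 * (α ^ 2 + β ^ 2))
      ≤ 2 * (1 - t1) * c ^ 2 * (A + B) := by
  have hsum := add_le_add hMa hMb
  have h2 : 0 ≤ 2 * (t1 - 1) := by linarith
  have hmul := mul_le_mul_of_nonneg_left hsum h2
  have hode2 : 2 * r * θv * t2 * (α ^ 2 + β ^ 2)
      = (1 - t1) * (r * t1 ^ 2 + θv) * (α ^ 2 + β ^ 2) := by rw [hode]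
  nlinarith [hmul, hode2]

lemma levi_key {m : ℕ} (x y a b : Fin m → ℝ) (θv t1 t2 : ℝ)
    (hθv : 0 < θv) (ht1 : 1 < t1) (hr : 0 < ∑ j, x j ^ 2)
    (hy : ∑ j, y j ^ 2 = θv)
    (hode : 2 * (∑ j, x j ^ 2) * θv * t2 = (1 - t1) * ((∑ j, x j ^ 2) * t1 ^ 2 + θv))
    (h1 : ∑ j, y j * b j = t1 * ∑ j, x j * a j)
    (h2 : ∑ j, y j * a j = -(t1 * ∑ j, x j * b j)) :
    (∑ j, x j ^ 2) * θv *
        (2 * (1 - t1) * ((∑ j, a j ^ 2) + ∑ j, b j ^ 2)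
          - 4 * t2 * ((∑ j, x j * a j) ^ 2 + (∑ j, x j * b j) ^ 2))
      ≤ 2 * (1 - t1) * (∑ j, x j * y j) ^ 2 * ((∑ j, a j ^ 2) + ∑ j, b j ^ 2) := by
  have hCS : (∑ j, x j * y j) ^ 2 ≤ (∑ j, x j ^ 2) * θv := by
    have h := Finset.sum_mul_sq_le_sq_mul_sq Finset.univ x y
    rw [hy] at h; exact h
  by_cases hD : 0 < (∑ j, x j ^ 2) * θv - (∑ j, x j * y j) ^ 2
  · have hga := gram_ineq x y a (by rw [hy]; exact hD)
    have hgb := gram_ineq x y b (by rw [hy]; exact hD)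
    rw [hy, h2] at hga
    rw [hy, h1] at hgb
    exact scalar1 _ _ _ _ _ _ _ _ _ hr hθv ht1 hode hga hgb
  · push_neg at hD
    have hc2 : (∑ j, x j * y j) ^ 2 = (∑ j, x j ^ 2) * θv := le_antisymm hCS (by linarith)
    set r := ∑ j, x j ^ 2 with hrdef
    set c := ∑ j, x j * y j with hcdef
    have hyx : ∀ j, y j = c / r * x j := by
      have hterm : ∀ j : Fin m, (y j - c / r * x j) ^ 2
          = y j ^ 2 - 2 * (c / r) * (x j * y j) + (c / r) ^ 2 * x j ^ 2 := fun j => by ring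
      have hsum : ∑ j, (y j - c / r * x j) ^ 2 = 0 := by
        rw [Finset.sum_congr rfl fun j _ => hterm j]
        simp only [Finset.sum_add_distrib, Finset.sum_sub_distrib, ← Finset.mul_sum]
        rw [hy, ← hcdef, ← hrdef]
        field_simp
        nlinarith [hc2]
      intro j
      have := (Finset.sum_eq_zero_iff_of_nonneg (fun j _ => sq_nonneg _)).mp hsum j
        (Finset.mem_univ j)
      have h0 : y j - c / r * x j = 0 := by
        have := pow_eq_zero_iff (n := 2) (by norm_num) |>.mp this
        exact this
      linarith
    have hδ : ∑ j, y j * b j = c / r * ∑ j, x j * b j := by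
      rw [Finset.sum_congr rfl fun j _ =>
        show y j * b j = c / r * (x j * b j) by rw [hyx j]; ring, ← Finset.mul_sum]
    have hγ : ∑ j, y j * a j = c / r * ∑ j, x j * a j := by
      rw [Finset.sum_congr rfl fun j _ =>
        show y j * a j = c / r * (x j * a j) by rw [hyx j]; ring, ← Finset.mul_sum]
    rw [hδ] at h1
    rw [hγ] at h2
    set α := ∑ j, x j * a j
    set β := ∑ j, x j * b j
    have hfac : ((c / r) ^ 2 + t1 ^ 2) * β = 0 := by linear_combination (c / r) * h1 + t1 * h2
    have hpos : 0 < (c / r) ^ 2 + t1 ^ 2 := by nlinarith [sq_nonneg (c / r)]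
    have hβ0 : β = 0 := by
      rcases mul_eq_zero.mp hfac with h | h
      · exact absurd h (ne_of_gt hpos)
      · exact h
    have hα0 : α = 0 := by
      rw [hβ0, mul_zero] at h1
      have ht1' : t1 ≠ 0 := by linarith
      field_simp at h1
      rcases mul_eq_zero.mp h1.symm with h | h
      · exact absurd h ht1'
      · exact h
    rw [hα0, hβ0, ← hc2]
    nlinarith [sq_nonneg c]

lemma sumsq_pos {m : ℕ} {v : Fin m → ℂ} (hv : v ≠ 0) :
    0 < (∑ j, (v j).re ^ 2) + ∑ j, (v j).im ^ 2 := by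
  obtain ⟨j, hj⟩ : ∃ j, v j ≠ 0 := by
    by_contra h; push_neg at h; exact hv (funext h)
  have hn := Complex.normSq_pos.mpr hj
  rw [Complex.normSq_apply] at hn
  have h2 : (v j).re ^ 2 ≤ ∑ i, (v i).re ^ 2 :=
    Finset.single_le_sum (f := fun i => (v i).re ^ 2) (fun i _ => sq_nonneg _) (Finset.mem_univ j)
  have h3 : (v j).im ^ 2 ≤ ∑ i, (v i).im ^ 2 :=
    Finset.single_le_sum (f := fun i => (v i).im ^ 2) (fun i _ => sq_nonneg _) (Finset.mem_univ j)
  nlinarith [hn, h2, h3]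

theorem stmt_3 {n : ℕ} (hn : 1 < n)
    (U : Set (Fin n → ℝ)) (hUne : U.Nonempty) (hUopen : IsOpen U)
    (hUinv : ∀ x x' : Fin n → ℝ, x ∈ U → (∑ j, x' j ^ 2) = (∑ j, x j ^ 2) → x' ∈ U)
    (θ : ℝ → ℝ) (V : Set ℝ) (hV : IsOpen V)
    (hIV : {s : ℝ | ∃ x ∈ U, s = ∑ j, x j ^ 2} ⊆ V)
    (hθ : ContDiffOn ℝ 2 θ V)
    (hθpos : ∀ s ∈ {s : ℝ | ∃ x ∈ U, s = ∑ j, x j ^ 2}, 0 < θ s)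
    (hode : ∀ s ∈ {s : ℝ | ∃ x ∈ U, s = ∑ j, x j ^ 2},
      2 * s * θ s * deriv (deriv θ) s =
        (1 - deriv θ s) * (s * (deriv θ s) ^ 2 + θ s))
    (hθ' : ∀ s ∈ {s : ℝ | ∃ x ∈ U, s = ∑ j, x j ^ 2}, 1 < deriv θ s) :
    (∀ p ∈ SigmaSet n U θ, ∀ v ∈ complexTangent (rho n θ) p,
        leviForm (rho n θ) p v ≤ 0) ∧
    (∀ p ∈ SigmaSet n U θ, (∑ j, (p j).re * (p j).im) ≠ 0 →
        ∀ v ∈ complexTangent (rho n θ) p, v ≠ 0 → leviForm (rho n θ) p v < 0) ∧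
    (∀ p ∈ SigmaSet n U θ, (∑ j, (p j).re * (p j).im) = 0 →
        ∃ v ∈ complexTangent (rho n θ) p, v ≠ 0 ∧ leviForm (rho n θ) p v = 0) := by
  -- common facts at a point p of the hypersurface
  have common : ∀ p ∈ SigmaSet n U θ,
      (∑ j, (p j).re ^ 2) ∈ V ∧ 0 < θ (∑ j, (p j).re ^ 2) ∧
      1 < deriv θ (∑ j, (p j).re ^ 2) ∧ 0 < (∑ j, (p j).re ^ 2) ∧
      (2 * (∑ j, (p j).re ^ 2) * θ (∑ j, (p j).re ^ 2) * deriv (deriv θ) (∑ j, (p j).re ^ 2)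
        = (1 - deriv θ (∑ j, (p j).re ^ 2)) *
          ((∑ j, (p j).re ^ 2) * (deriv θ (∑ j, (p j).re ^ 2)) ^ 2 + θ (∑ j, (p j).re ^ 2))) := by
    intro p hp
    have hrI : (∑ j, (p j).re ^ 2) ∈ {s : ℝ | ∃ x ∈ U, s = ∑ j, x j ^ 2} :=
      ⟨fun j => (p j).re, hp.1, rfl⟩
    refine ⟨hIV hrI, hθpos _ hrI, hθ' _ hrI, ?_, hode _ hrI⟩
    have hr0 : 0 ≤ ∑ j, (p j).re ^ 2 := Finset.sum_nonneg fun j _ => sq_nonneg _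
    rcases hr0.lt_or_eq with h | h
    · exact h
    · exfalso
      have ho := hode _ hrI
      have h1 := hθ' _ hrI
      have h2 := hθpos _ hrI
      rw [← h] at ho h1 h2
      nlinarith [ho, h1, h2]
  -- translated tangency conditions
  have tangent : ∀ p ∈ SigmaSet n U θ, ∀ v ∈ complexTangent (rho n θ) p,
      (∑ j, (p j).im * (v j).im
         = deriv θ (∑ j, (p j).re ^ 2) * ∑ j, (p j).re * (v j).re) ∧
      (∑ j, (p j).im * (v j).re
         = -(deriv θ (∑ j, (p j).re ^ 2) * ∑ j, (p j).re * (v j).im)) := by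
    intro p hp v hv
    obtain ⟨hpV, -, -, -, -⟩ := common p hp
    obtain ⟨hv1, hv2⟩ := hv
    rw [fderiv_rho_eq hV hθ hpV, Gmap_apply] at hv1 hv2
    have hre : ∀ j, ((Complex.I • v) j).re = -(v j).im := by
      intro j; simp [Pi.smul_apply, Complex.mul_re]
    have him : ∀ j, ((Complex.I • v) j).im = (v j).re := by
      intro j; simp [Pi.smul_apply, Complex.mul_im]
    simp only [hre, him] at hv2
    have e1 : ∑ j, (p j).re * -(v j).im = -∑ j, (p j).re * (v j).im := by
      rw [← Finset.sum_neg_distrib]; exact Finset.sum_congr rfl fun j _ => by ring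
    rw [e1] at hv2
    constructor
    · linarith [hv1]
    · linarith [hv2]
  -- key estimate
  have main : ∀ p ∈ SigmaSet n U θ, ∀ v ∈ complexTangent (rho n θ) p,
      (∑ j, (p j).re ^ 2) * θ (∑ j, (p j).re ^ 2) *
        (2 * (1 - deriv θ (∑ j, (p j).re ^ 2)) * ((∑ j, (v j).re ^ 2) + ∑ j, (v j).im ^ 2)
          - 4 * deriv (deriv θ) (∑ j, (p j).re ^ 2)
              * ((∑ j, (p j).re * (v j).re) ^ 2 + (∑ j, (p j).re * (v j).im) ^ 2))
      ≤ 2 * (1 - deriv θ (∑ j, (p j).re ^ 2)) * (∑ j, (p j).re * (p j).im) ^ 2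
          * ((∑ j, (v j).re ^ 2) + ∑ j, (v j).im ^ 2) := by
    intro p hp v hv
    obtain ⟨hpV, hθv, ht1, hrpos, ho⟩ := common p hp
    obtain ⟨h1, h2⟩ := tangent p hp v hv
    have key := levi_key (fun j => (p j).re) (fun j => (p j).im)
      (fun j => (v j).re) (fun j => (v j).im)
      (θ (∑ j, (p j).re ^ 2)) (deriv θ (∑ j, (p j).re ^ 2))
      (deriv (deriv θ) (∑ j, (p j).re ^ 2)) hθv ht1 hrpos hp.2 ho h1 h2
    exact key
  refine ⟨?_, ?_, ?_⟩
  · -- part 1 : nonpositive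
    intro p hp v hv
    obtain ⟨hpV, hθv, ht1, hrpos, ho⟩ := common p hp
    have key := main p hp v hv
    rw [levi_eval hV hθ hpV]
    have hAB : (0:ℝ) ≤ (∑ j, (v j).re ^ 2) + ∑ j, (v j).im ^ 2 :=
      add_nonneg (Finset.sum_nonneg fun j _ => sq_nonneg _)
        (Finset.sum_nonneg fun j _ => sq_nonneg _)
    have hRHS : 2 * (1 - deriv θ (∑ j, (p j).re ^ 2)) * (∑ j, (p j).re * (p j).im) ^ 2
        * ((∑ j, (v j).re ^ 2) + ∑ j, (v j).im ^ 2) ≤ 0 := by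
      nlinarith [mul_nonneg (sq_nonneg (∑ j, (p j).re * (p j).im)) hAB, ht1]
    have hN : 2 * (1 - deriv θ (∑ j, (p j).re ^ 2)) * ((∑ j, (v j).re ^ 2) + ∑ j, (v j).im ^ 2)
        - 4 * deriv (deriv θ) (∑ j, (p j).re ^ 2)
          * ((∑ j, (p j).re * (v j).re) ^ 2 + (∑ j, (p j).re * (v j).im) ^ 2) ≤ 0 := by
      by_contra hcon
      push_neg at hcon
      have := mul_pos (mul_pos hrpos hθv) hcon
      linarith [key, hRHS]
    linarith
  · -- part 2 : strictly negative
    intro p hp hc v hv hv0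
    obtain ⟨hpV, hθv, ht1, hrpos, ho⟩ := common p hp
    have key := main p hp v hv
    rw [levi_eval hV hθ hpV]
    have hABpos := sumsq_pos hv0
    have hcsq : 0 < (∑ j, (p j).re * (p j).im) ^ 2 := by
      rcases (sq_nonneg (∑ j, (p j).re * (p j).im)).lt_or_eq with h | h
      · exact h
      · exact absurd (pow_eq_zero_iff (n := 2) (by norm_num) |>.mp h.symm) hc
    have hRHS : 2 * (1 - deriv θ (∑ j, (p j).re ^ 2)) * (∑ j, (p j).re * (p j).im) ^ 2
        * ((∑ j, (v j).re ^ 2) + ∑ j, (v j).im ^ 2) < 0 := by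
      nlinarith [mul_pos hcsq hABpos, ht1]
    have hN : 2 * (1 - deriv θ (∑ j, (p j).re ^ 2)) * ((∑ j, (v j).re ^ 2) + ∑ j, (v j).im ^ 2)
        - 4 * deriv (deriv θ) (∑ j, (p j).re ^ 2)
          * ((∑ j, (p j).re * (v j).re) ^ 2 + (∑ j, (p j).re * (v j).im) ^ 2) < 0 := by
      by_contra hcon
      push_neg at hcon
      have := mul_nonneg (mul_pos hrpos hθv).le hcon
      linarith [key, hRHS]
    linarith
  · -- part 3 : degenerate direction when ⟨x, y⟩ = 0
    intro p hp hc
    obtain ⟨hpV, hθv, ht1, hrpos, ho⟩ := common p hp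
    set R := ∑ j, (p j).re ^ 2 with hRdef
    set μ := deriv θ R * R / θ R with hμdef
    set v : Fin n → ℂ := fun j => ⟨(p j).re, μ * (p j).im⟩ with hvdef
    have hvre : ∀ j, (v j).re = (p j).re := fun j => rfl
    have hvim : ∀ j, (v j).im = μ * (p j).im := fun j => rfl
    -- sums
    have s1 : ∑ j, (p j).re * (v j).re = R := by
      rw [hRdef]; exact Finset.sum_congr rfl fun j _ => by rw [hvre]; ring
    have s2 : ∑ j, (p j).re * (v j).im = 0 := by
      have : ∑ j, (p j).re * (v j).im = μ * ∑ j, (p j).re * (p j).im := by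
        rw [Finset.sum_congr rfl fun j _ =>
          show (p j).re * (v j).im = μ * ((p j).re * (p j).im) by rw [hvim]; ring,
          ← Finset.mul_sum]
      rw [this, hc, mul_zero]
    have s3 : ∑ j, (p j).im * (v j).im = μ * θ R := by
      have : ∑ j, (p j).im * (v j).im = μ * ∑ j, (p j).im ^ 2 := by
        rw [Finset.sum_congr rfl fun j _ =>
          show (p j).im * (v j).im = μ * ((p j).im ^ 2) by rw [hvim]; ring,
          ← Finset.mul_sum]
      rw [this, hp.2]
    have s4 : ∑ j, (p j).im * (v j).re = 0 := by
      have : ∑ j, (p j).im * (v j).re = ∑ j, (p j).re * (p j).im := by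
        exact Finset.sum_congr rfl fun j _ => by rw [hvre]; ring
      rw [this, hc]
    have s5 : ∑ j, (v j).re ^ 2 = R := by
      rw [hRdef]
    have s6 : ∑ j, (v j).im ^ 2 = μ ^ 2 * θ R := by
      have : ∑ j, (v j).im ^ 2 = μ ^ 2 * ∑ j, (p j).im ^ 2 := by
        rw [Finset.sum_congr rfl fun j _ =>
          show (v j).im ^ 2 = μ ^ 2 * ((p j).im ^ 2) by rw [hvim]; ring,
          ← Finset.mul_sum]
      rw [this, hp.2]
    have hθne : θ R ≠ 0 := ne_of_gt hθv
    -- v ≠ 0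
    have hvne : v ≠ 0 := by
      obtain ⟨j, hj⟩ : ∃ j, (p j).re ≠ 0 := by
        by_contra h
        push_neg at h
        have : R = 0 := by
          rw [hRdef]
          exact Finset.sum_eq_zero fun j _ => by rw [h j]; ring
        rw [this] at hrpos
        exact lt_irrefl 0 hrpos
      intro h0
      have := congrFun h0 j
      have : (v j).re = 0 := by rw [this]; rfl
      rw [hvre] at this
      exact hj this
    -- tangency
    have htan : v ∈ complexTangent (rho n θ) p := by
      constructor
      · rw [fderiv_rho_eq hV hθ hpV, Gmap_apply, s3, s1]
        rw [hμdef]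
        field_simp
        ring
      · rw [fderiv_rho_eq hV hθ hpV, Gmap_apply]
        have hre : ∀ j, ((Complex.I • v) j).re = -(v j).im := by
          intro j; simp [Pi.smul_apply, Complex.mul_re]
        have him : ∀ j, ((Complex.I • v) j).im = (v j).re := by
          intro j; simp [Pi.smul_apply, Complex.mul_im]
        simp only [hre, him]
        have e1 : ∑ j, (p j).re * -(v j).im = -∑ j, (p j).re * (v j).im := by
          rw [← Finset.sum_neg_distrib]; exact Finset.sum_congr rfl fun j _ => by ring
        rw [e1, s2, s4]
        ring
    refine ⟨v, htan, hvne, ?_⟩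
    rw [levi_eval hV hθ hpV, s5, s6, s1, s2]
    have hnum : 2 * (1 - deriv θ R) * (R + μ ^ 2 * θ R)
        - 4 * deriv (deriv θ) R * (R ^ 2 + 0 ^ 2) = 0 := by
      rw [hμdef]
      field_simp
      linear_combination (-2 * R) * ho
    rw [hnum]
    norm_num
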